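/- Singleton-style bound for rank distance codes: any linear code C of dimension k in GF(q^N)^n (n ≤ N) with minimum rank distance d satisfies d ≤ n - k + 1. -/

import Mathlib

/-- Singleton-style bound for rank distance codes: a linear code `C` of
dimension `k` in `GF(q^N)^n` (with `n ≤ N`) whose minimum rank distance is `d`
satisfies `d ≤ n - k + 1`. -/
theorem stmt3 (K L : Type*) [Field K] [Field L] [Algebra K L] (N n k d : ℕ) (hn : n ≤ N)
    (b : Module.Basis (Fin N) K L)
    (M : (Fin n → L) → Matrix (Fin N) (Fin n) K)
    (hM : ∀ x i j, M x i j = b.repr (x j) i)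
    (C : Submodule L (Fin n → L)) (hk : Module.finrank L C = k)
    (hd : IsLeast {m : ℕ | ∃ x ∈ C, x ≠ 0 ∧ (M x).rank = m} d) :
    d ≤ n - k + 1 := by
  classical
  obtain ⟨x0, hx0C, hx0ne, _⟩ := hd.1
  have hk1 : 1 ≤ k := by
    rw [← hk]
    apply Submodule.one_le_finrank_iff.mpr
    intro h
    exact hx0ne (by simpa [h, Submodule.mem_bot] using hx0C)
  have hkn : k ≤ n := by
    rw [← hk]
    calc Module.finrank L C ≤ Module.finrank L (Fin n → L) := Submodule.finrank_le C
    _ = n := by simp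
  -- project onto the first k-1 coordinates
  let f : C →ₗ[L] (Fin (k-1) → L) :=
    { toFun := fun c i => c.val (Fin.castLE (by omega) i)
      map_add' := by intros; rfl
      map_smul' := by intros; rfl }
  have hninj : ¬ Function.Injective f := by
    intro hinj
    have h1 := LinearMap.finrank_le_finrank_of_injective hinj
    rw [hk] at h1
    simp [Module.finrank_pi] at h1
    omega
  rw [← LinearMap.ker_eq_bot] at hninj
  obtain ⟨c, hcker, hcne⟩ := Submodule.exists_mem_ne_zero_of_ne_bot hninj
  set x : Fin n → L := c.val with hxdef
  have hxC : x ∈ C := c.2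
  have hxne : x ≠ 0 := fun h => hcne (Subtype.ext h)
  have hzero : ∀ j : Fin n, (j : ℕ) < k - 1 → x j = 0 := by
    intro j hj
    have := congrFun (LinearMap.mem_ker.mp hcker) ⟨(j : ℕ), hj⟩
    simpa [f] using this
  have hle : d ≤ (M x).rank := hd.2 ⟨x, hxC, hxne, rfl⟩
  set T : Finset (Fin n) := Finset.univ.filter (fun j => k - 1 ≤ (j:ℕ)) with hT
  have hrank : (M x).rank ≤ T.card := by
    rw [Matrix.rank_eq_finrank_span_cols]
    have hsub : Submodule.span K (Set.range (M x).transpose) ≤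
        Submodule.span K ((T.image (M x).transpose : Finset (Fin N → K)) : Set (Fin N → K)) := by
      rw [Submodule.span_le]
      rintro _ ⟨j, rfl⟩
      by_cases hj : k - 1 ≤ (j:ℕ)
      · apply Submodule.subset_span
        simp only [Finset.coe_image, Set.mem_image, Finset.mem_coe]
        exact Finset.mem_image.mpr ⟨j, by simp only [hT, Finset.mem_filter, Finset.mem_univ, true_and]; omega, rfl⟩
      · have hcol : (M x).transpose j = 0 := by
          funext i
          have hxj : x j = 0 := hzero j (by omega)
          simp [Matrix.transpose_apply, hM, hxj]
        rw [hcol]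
        exact Submodule.zero_mem _
    calc Module.finrank K (Submodule.span K (Set.range (M x).transpose))
        ≤ Module.finrank K (Submodule.span K ((T.image (M x).transpose : Finset (Fin N → K)) : Set (Fin N → K))) :=
          Submodule.finrank_mono hsub
      _ ≤ (T.image (M x).transpose).card := finrank_span_finset_le_card _
      _ ≤ T.card := Finset.card_image_le
  have hTcard : T.card = n - (k - 1) := by
    have h1 : (Finset.univ.filter (fun j : Fin n => (j:ℕ) < k - 1)).card = k - 1 := by
      have : (Finset.univ.filter (fun j : Fin n => (j:ℕ) < k - 1)) =
          (Finset.range (k-1)).attachFin (fun m hm => lt_of_lt_of_le (Finset.mem_range.mp hm) (by omega)) := by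
        ext j
        simp [Finset.mem_attachFin]
      rw [this]
      simp
    have h2 := Finset.card_filter_add_card_filter_not (s := Finset.univ)
      (p := fun j : Fin n => (j:ℕ) < k - 1)
    simp only [Finset.card_univ, Fintype.card_fin, not_lt] at h2
    rw [h1] at h2
    have : T.card = n - (k-1) := by
      rw [hT]
      omega
    exact this
  omega
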